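/- Let 𝔽 be a field and B ⊆ 𝔽^n[X]. Then the smallest 𝔽[X]-direct summand of 𝔽^n[X] containing B equals B* ∩ 𝔽^n[X], where B* denotes the 𝔽((X))-span of B in 𝔽^n((X)). Moreover the rank of the 𝔽[X]-module generated by B equals the 𝔽((X))-dimension of B*. -/

import Mathlib

open Submodule

section Aux

/-- Linear independence of tuples of field elements transfers along a field embedding. -/
lemma li_map_field {K L : Type*} [Field K] [Field L] (f : K →+* L) {m n : ℕ}
    {v : Fin m → Fin n → K} (hv : LinearIndependent K v) :
    LinearIndependent L (fun i => f ∘ v i) := by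
  classical
  have hinj : Function.Injective v := hv.injective
  have hs : LinearIndepOn K id (Set.range v) := hv.linearIndepOn_id
  let b : Module.Basis _ K (Fin n → K) := Module.Basis.extend hs
  have hmem : ∀ i, v i ∈ hs.extend (Set.subset_univ _) := fun i =>
    hs.subset_extend _ ⟨i, rfl⟩
  let g : (Fin n → K) →ₗ[K] (Fin m → K) :=
    LinearMap.pi fun i => b.coord ⟨v i, hmem i⟩
  have hg : ∀ j, g (v j) = Pi.single j 1 := by
    intro j
    funext i
    have hvj : v j = b ⟨v j, hmem j⟩ := (Module.Basis.extend_apply_self hs ⟨v j, hmem j⟩).symm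
    have h1 : g (v j) i = b.repr (v j) ⟨v i, hmem i⟩ := rfl
    rw [h1, hvj, b.repr_self, Finsupp.single_apply]
    by_cases hij : i = j
    · subst hij; simp
    · have hne : ¬((⟨v j, hmem j⟩ : hs.extend (Set.subset_univ _)) = ⟨v i, hmem i⟩) := by
        intro h
        exact hij (hinj (by simpa using congrArg Subtype.val h)).symm
      rw [if_neg hne]
      simp [Pi.single_apply, hij]
  let G : Matrix (Fin m) (Fin n) K := LinearMap.toMatrix' g
  have hGmul : ∀ x, G.mulVec x = g x := fun x => by
    rw [← Matrix.toLin'_apply, Matrix.toLin'_toMatrix']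
  have hGv : ∀ j, G.mulVec (v j) = Pi.single j 1 := fun j => by rw [hGmul, hg]
  let G' : Matrix (Fin m) (Fin n) L := G.map f
  have hmap : ∀ x : Fin n → K, G'.mulVec (f ∘ x) = f ∘ G.mulVec x := by
    intro x
    funext i
    simp [G', Matrix.mulVec, dotProduct, map_sum, map_mul]
  have hG'v : ∀ j, G'.mulVec (f ∘ v j) = Pi.single j 1 := by
    intro j
    rw [hmap, hGv]
    funext i
    by_cases hij : i = j <;> simp [Pi.single_apply, hij]
  rw [Fintype.linearIndependent_iff]
  intro c hc i
  have h2 := congrArg G'.mulVecLin hc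
  simp only [map_sum, map_smul, map_zero, Matrix.mulVecLin_apply] at h2
  simp only [hG'v] at h2
  have h3 := congrFun h2 i
  simpa [Pi.single_apply] using h3

end Aux

/-- The `𝔽[X]`-linear embedding of polynomial vectors into `𝔽ⁿ⸨X⸩`. -/
noncomputable def embV (F : Type*) [Field F] (n : ℕ) :
    (Fin n → Polynomial F) →ₗ[Polynomial F] (Fin n → LaurentSeries F) :=
  LinearMap.pi fun i =>
    (Algebra.linearMap (Polynomial F) (LaurentSeries F)).comp (LinearMap.proj i)

/-- The `𝔽[X]`-submodule `𝔽ⁿ[X]` of polynomial vectors inside `𝔽ⁿ⸨X⸩`. -/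
noncomputable def polyVec (F : Type*) [Field F] (n : ℕ) :
    Submodule (Polynomial F) (Fin n → LaurentSeries F) :=
  LinearMap.range (embV F n)

/-- `D` is an `𝔽[X]`-direct summand of `𝔽ⁿ[X]`. -/
def IsSummand (F : Type*) [Field F] (n : ℕ)
    (D : Submodule (Polynomial F) (Fin n → LaurentSeries F)) : Prop :=
  D ≤ polyVec F n ∧ ∃ C : Submodule (Polynomial F) (Fin n → LaurentSeries F),
    C ≤ polyVec F n ∧ D ⊓ C = ⊥ ∧ D ⊔ C = polyVec F n

section Aux2

variable {F : Type*} [Field F] {n : ℕ}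

attribute [local instance] RatFunc.liftAlgebra

lemma algebraMap_laurent_injective :
    Function.Injective (algebraMap (Polynomial F) (LaurentSeries F)) := by
  intro a b h
  apply IsFractionRing.injective (Polynomial F) (RatFunc F)
  apply (algebraMap (RatFunc F) (LaurentSeries F)).injective
  rw [← IsScalarTower.algebraMap_apply, ← IsScalarTower.algebraMap_apply]
  exact h

lemma embV_injective : Function.Injective (embV F n) := by
  intro x y h
  funext j
  exact algebraMap_laurent_injective (congrFun h j)

set_option synthInstance.maxHeartbeats 1000000 in
/-- Linear independence over `𝔽[X]` of polynomial vectors transfers to `𝔽⸨X⸩`. -/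
lemma li_poly_laurent {m : ℕ} {v : Fin m → Fin n → Polynomial F}
    (hv : LinearIndependent (Polynomial F) v) :
    LinearIndependent (LaurentSeries F) (fun i => embV F n (v i)) := by
  classical
  let eK : (Fin n → Polynomial F) →ₗ[Polynomial F] (Fin n → RatFunc F) :=
    LinearMap.pi fun i =>
      (Algebra.linearMap (Polynomial F) (RatFunc F)).comp (LinearMap.proj i)
  have heK : Function.Injective eK := by
    intro x y h
    funext j
    exact IsFractionRing.injective (Polynomial F) (RatFunc F) (congrFun h j)
  have h1 : LinearIndependent (Polynomial F) (fun i => eK (v i)) :=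
    hv.map' eK (LinearMap.ker_eq_bot.mpr heK)
  haveI : IsScalarTower (Polynomial F) (RatFunc F) (Fin n → RatFunc F) :=
    Pi.isScalarTower
  have h2 : LinearIndependent (RatFunc F) (fun i => eK (v i)) :=
    (LinearIndependent.iff_fractionRing (Polynomial F) (RatFunc F)).mp h1
  have h3 := li_map_field (algebraMap (RatFunc F) (LaurentSeries F)) h2
  convert h3 using 2 with i
  case e'_5 => rfl
  funext j
  show algebraMap (Polynomial F) (LaurentSeries F) (v i j)
      = algebraMap (RatFunc F) (LaurentSeries F) (algebraMap (Polynomial F) (RatFunc F) (v i j))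
  rw [← IsScalarTower.algebraMap_apply]

end Aux2

set_option maxHeartbeats 2000000 in
set_option synthInstance.maxHeartbeats 400000 in
theorem stmt19 (F : Type*) [Field F] (n : ℕ) (B : Set (Fin n → LaurentSeries F))
    (hB : B ⊆ (polyVec F n : Set (Fin n → LaurentSeries F))) :
    (B ⊆ ((Submodule.span (LaurentSeries F) B).restrictScalars (Polynomial F) ⊓ polyVec F n :
        Set (Fin n → LaurentSeries F))) ∧
    IsSummand F n
      ((Submodule.span (LaurentSeries F) B).restrictScalars (Polynomial F) ⊓ polyVec F n) ∧
    (∀ D : Submodule (Polynomial F) (Fin n → LaurentSeries F),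
      IsSummand F n D → B ⊆ (D : Set (Fin n → LaurentSeries F)) →
      (Submodule.span (LaurentSeries F) B).restrictScalars (Polynomial F) ⊓ polyVec F n ≤ D) ∧
    Module.rank (Polynomial F) ↥(Submodule.span (Polynomial F) B) =
      Module.rank (LaurentSeries F) ↥(Submodule.span (LaurentSeries F) B) := by
  classical
  set e := embV F n with he_def
  have he : Function.Injective e := embV_injective
  set M := (Submodule.span (LaurentSeries F) B).restrictScalars (Polynomial F) ⊓ polyVec F n
    with hM_def
  -- the torsion-free trick
  have hsmul : ∀ (q : Polynomial F) (w : Fin n → LaurentSeries F),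
      q • w = (algebraMap (Polynomial F) (LaurentSeries F) q) • w := fun q w =>
    (algebraMap_smul (LaurentSeries F) q w).symm
  have hdiv : ∀ (q : Polynomial F), q ≠ 0 → ∀ w : Fin n → LaurentSeries F,
      q • w ∈ Submodule.span (LaurentSeries F) B → w ∈ Submodule.span (LaurentSeries F) B := by
    intro q hq w hw
    have hq' : (algebraMap (Polynomial F) (LaurentSeries F) q) ≠ 0 := fun h =>
      hq (algebraMap_laurent_injective (by simpa using h))
    rw [hsmul] at hw
    have h2 := Submodule.smul_mem (Submodule.span (LaurentSeries F) B)
      (algebraMap (Polynomial F) (LaurentSeries F) q)⁻¹ hw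
    rwa [inv_smul_smul₀ hq'] at h2
  refine ⟨fun b hb => ⟨Submodule.subset_span hb, hB hb⟩, ?_, ?_, ?_⟩
  · -- M is a direct summand
    set N := Submodule.comap e M with hN_def
    have hMple : M ≤ LinearMap.range e := inf_le_right
    have hmapN : Submodule.map e N = M := by
      rw [hN_def, Submodule.map_comap_eq, inf_eq_right.mpr hMple]
    haveI : NoZeroSMulDivisors (Polynomial F) ((Fin n → Polynomial F) ⧸ N) := by
      refine ⟨fun {q x} h => ?_⟩
      by_cases hq : q = 0
      · exact Or.inl hq
      refine Or.inr ?_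
      obtain ⟨p, rfl⟩ := N.mkQ_surjective x
      rw [← map_smul, Submodule.mkQ_apply, Submodule.Quotient.mk_eq_zero] at h
      rw [Submodule.mkQ_apply, Submodule.Quotient.mk_eq_zero]
      have h1 : e (q • p) ∈ Submodule.span (LaurentSeries F) B := h.1
      rw [map_smul] at h1
      exact ⟨hdiv q hq _ h1, ⟨p, rfl⟩⟩
    obtain ⟨s, hs⟩ := Module.projective_lifting_property N.mkQ LinearMap.id N.mkQ_surjective
    have hsapp : ∀ y, N.mkQ (s y) = y := fun y => congrArg (· y) hs
    set f : (Fin n → Polynomial F) →ₗ[Polynomial F] (Fin n → Polynomial F) :=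
      LinearMap.id - s ∘ₗ N.mkQ with hf_def
    have hfm : ∀ p, f p ∈ N := by
      intro p
      have h1 : f p = p - s (N.mkQ p) := rfl
      have h2 : N.mkQ (f p) = 0 := by rw [h1, map_sub, hsapp, sub_self]
      rwa [Submodule.mkQ_apply, Submodule.Quotient.mk_eq_zero] at h2
    set f' := f.codRestrict N hfm with hf'_def
    have hproj : ∀ x : N, f' x = x := by
      intro x
      apply Subtype.ext
      have hx0 : N.mkQ x = 0 := (Submodule.Quotient.mk_eq_zero N).mpr x.2
      show f x = x
      simp [hf_def, hx0]
    have hcompl := LinearMap.isCompl_of_proj hproj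
    have hCle : Submodule.map e (LinearMap.ker f') ≤ polyVec F n := by
      rintro x ⟨p, -, rfl⟩
      exact ⟨p, rfl⟩
    refine ⟨inf_le_right, Submodule.map e (LinearMap.ker f'), hCle, ?_, ?_⟩
    · rw [← hmapN, ← Submodule.map_inf e he, hcompl.inf_eq_bot, Submodule.map_bot]
    · rw [← hmapN, ← Submodule.map_sup, hcompl.sup_eq_top, Submodule.map_top]
      rfl
  · -- minimality
    rintro D ⟨hDpv, C, hCpv, hDC, hDCsup⟩ hBD
    set D' := Submodule.comap e D with hD'_def
    have hDple : D ≤ LinearMap.range e := hDpv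
    have hmapD : Submodule.map e D' = D := by
      rw [hD'_def, Submodule.map_comap_eq, inf_eq_right.mpr hDple]
    obtain ⟨k, b⟩ := Submodule.basisOfPid (Pi.basisFun (Polynomial F) (Fin n)) D'
    set v : Fin k → Fin n → Polynomial F := fun j => (b j : Fin n → Polynomial F) with hv_def
    have hvind : LinearIndependent (Polynomial F) v :=
      b.linearIndependent.map' D'.subtype D'.ker_subtype
    set u : Fin k → Fin n → LaurentSeries F := fun j => e (v j) with hu_def
    have hspanv : Submodule.span (Polynomial F) (Set.range v) = D' := by
      have : Set.range v = D'.subtype '' Set.range (b : Fin k → D') := by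
        rw [← Set.range_comp]; rfl
      rw [this, ← Submodule.map_span, b.span_eq, Submodule.map_subtype_top]
    have hspanu : Submodule.span (Polynomial F) (Set.range u) = D := by
      have : Set.range u = e '' Set.range v := by rw [← Set.range_comp]; rfl
      rw [this, ← Submodule.map_span, hspanv, hmapD]
    have hspanuL : Submodule.span (LaurentSeries F) (Set.range u) =
        Submodule.span (LaurentSeries F) (D : Set (Fin n → LaurentSeries F)) := by
      conv_rhs => rw [← hspanu]
      rw [Submodule.span_span_of_tower]
    rintro x ⟨hx1, hx2⟩
    have hx1' : x ∈ Submodule.span (LaurentSeries F) B := hx1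
    rw [← hDCsup] at hx2
    obtain ⟨d, hd, c, hc, rfl⟩ := Submodule.mem_sup.mp hx2
    -- c lies in the Laurent span of u
    have hcspan : c ∈ Submodule.span (LaurentSeries F) (Set.range u) := by
      rw [hspanuL]
      have hxD : d + c - d ∈ Submodule.span (LaurentSeries F) (D : Set _) := by
        refine sub_mem ?_ (Submodule.subset_span hd)
        exact Submodule.span_mono hBD hx1'
      simpa using hxD
    obtain ⟨p, rfl⟩ := hCpv hc
    -- the extended family is dependent over the Laurent series
    have hdepL : ¬ LinearIndependent (LaurentSeries F) (Fin.cons (e p) u) := by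
      intro h
      exact (linearIndependent_fin_cons.mp h).2 hcspan
    set w : Fin (k+1) → Fin n → Polynomial F := Fin.cons p v with hw_def
    have hw0 : w 0 = p := Fin.cons_zero _ _
    have hwsucc : ∀ j, w j.succ = v j := fun j => Fin.cons_succ _ _ _
    have hdepP : ¬ LinearIndependent (Polynomial F) w := by
      intro h
      apply hdepL
      have h2 := li_poly_laurent h
      have h3 : (fun i => e (w i)) = Fin.cons (e p) u := by
        funext i
        refine Fin.cases ?_ (fun j => ?_) i
        · rw [hw0, Fin.cons_zero]
        · rw [hwsucc, Fin.cons_succ]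
      rwa [h3] at h2
    rw [Fintype.not_linearIndependent_iff] at hdepP
    obtain ⟨a, hsum, i0, hi0⟩ := hdepP
    have hsum' : a 0 • p + ∑ j : Fin k, a j.succ • v j = 0 := by
      rw [Fin.sum_univ_succ, hw0] at hsum
      simp only [hwsucc] at hsum
      exact hsum
    by_cases hq : a 0 = 0
    · exfalso
      rw [hq, zero_smul, zero_add] at hsum'
      have hz := (Fintype.linearIndependent_iff.mp hvind) (fun j => a j.succ) hsum'
      exact hi0 (Fin.cases hq hz i0)
    · -- a 0 • (e p) lies in D ⊓ C = ⊥
      have hD1 : e (a 0 • p) ∈ D := by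
        have : a 0 • p = - ∑ j : Fin k, a j.succ • v j := by
          rw [eq_neg_iff_add_eq_zero]; exact hsum'
        rw [this, map_neg, map_sum]
        refine neg_mem (Submodule.sum_mem _ fun j _ => ?_)
        rw [map_smul]
        refine Submodule.smul_mem _ _ ?_
        rw [← hmapD]
        exact ⟨v j, b j |>.2, rfl⟩
      have hC1 : e (a 0 • p) ∈ C := by
        rw [map_smul]
        exact Submodule.smul_mem _ _ hc
      have hbot : e (a 0 • p) = 0 := by
        have : e (a 0 • p) ∈ D ⊓ C := ⟨hD1, hC1⟩
        rwa [hDC, Submodule.mem_bot] at this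
      have hq' : (algebraMap (Polynomial F) (LaurentSeries F) (a 0)) ≠ 0 := fun h =>
        hq (algebraMap_laurent_injective (by simpa using h))
      have hep : e p = 0 := by
        rw [map_smul, hsmul] at hbot
        calc e p = (algebraMap (Polynomial F) (LaurentSeries F) (a 0))⁻¹ •
              ((algebraMap (Polynomial F) (LaurentSeries F) (a 0)) • e p) :=
            (inv_smul_smul₀ hq' _).symm
          _ = 0 := by rw [hbot, smul_zero]

      rw [hep, add_zero]
      exact hd
  · -- rank equality
    have hBspan : Submodule.span (Polynomial F) B ≤ polyVec F n :=
      Submodule.span_le.mpr hB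
    set SB := Submodule.span (Polynomial F) B with hSB_def
    set NB := Submodule.comap e SB with hNB_def
    have hSBple : SB ≤ LinearMap.range e := hBspan
    have hmapNB : Submodule.map e NB = SB := by
      rw [hNB_def, Submodule.map_comap_eq, inf_eq_right.mpr hSBple]
    obtain ⟨k, b⟩ := Submodule.basisOfPid (Pi.basisFun (Polynomial F) (Fin n)) NB
    set v : Fin k → Fin n → Polynomial F := fun j => (b j : Fin n → Polynomial F) with hv_def
    have hvind : LinearIndependent (Polynomial F) v :=
      b.linearIndependent.map' NB.subtype NB.ker_subtype
    set u : Fin k → Fin n → LaurentSeries F := fun j => e (v j) with hu_def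
    have hspanv : Submodule.span (Polynomial F) (Set.range v) = NB := by
      have : Set.range v = NB.subtype '' Set.range (b : Fin k → NB) := by
        rw [← Set.range_comp]; rfl
      rw [this, ← Submodule.map_span, b.span_eq, Submodule.map_subtype_top]
    have hspanu : Submodule.span (Polynomial F) (Set.range u) = SB := by
      have : Set.range u = e '' Set.range v := by rw [← Set.range_comp]; rfl
      rw [this, ← Submodule.map_span, hspanv, hmapNB]
    have huind : LinearIndependent (LaurentSeries F) u := li_poly_laurent hvind
    -- LHS
    have hrank1 : Module.rank (Polynomial F) ↥SB = (k : Cardinal) := by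
      have eqv : NB ≃ₗ[Polynomial F] SB :=
        (Submodule.equivMapOfInjective e he NB).trans (LinearEquiv.ofEq _ _ hmapNB)
      have hb2 : Module.Basis (Fin k) (Polynomial F) ↥SB := b.map eqv
      have h := rank_eq_card_basis (R := Polynomial F) (M := ↥SB) (ι := Fin k) hb2
      rw [Fintype.card_fin] at h
      exact h
    -- RHS
    have hspanBL : Submodule.span (LaurentSeries F) (Set.range u) =
        Submodule.span (LaurentSeries F) B := by
      have h1 : Submodule.span (LaurentSeries F) (Set.range u) =
          Submodule.span (LaurentSeries F) (SB : Set (Fin n → LaurentSeries F)) := by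
        conv_rhs => rw [← hspanu]
        rw [Submodule.span_span_of_tower]
      rw [h1]
      have hSBle : SB ≤ (Submodule.span (LaurentSeries F) B).restrictScalars (Polynomial F) :=
        Submodule.span_le.mpr (fun z hz => Submodule.subset_span hz)
      apply le_antisymm
      · exact Submodule.span_le.mpr (fun z hz => hSBle hz)
      · exact Submodule.span_mono Submodule.subset_span
    have hrank2 : Module.rank (LaurentSeries F) ↥(Submodule.span (LaurentSeries F) B)
        = (k : Cardinal) := by
      rw [← hspanBL]
      have h := rank_eq_card_basis (Module.Basis.span huind)
      rw [Fintype.card_fin] at h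
      exact h
    rw [hrank1, hrank2]
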